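/- Let 0 < x < 1 and n ≥ 1, and let S_n = Z₁ + ... + Z_n be a sum of independent geometric random variables with P(Zᵢ ≥ k) = x^{ik}. Then the distribution of S_n is log-concave: for all k ≥ 0, P(S_n = k+1)² ≥ P(S_n = k) · P(S_n = k+2). -/

import Mathlib

open MeasureTheory ProbabilityTheory


lemma ratio_mono (b : ℕ → ℝ) (hb : ∀ k, 0 < b k)
    (hlc : ∀ k, b k * b (k+2) ≤ b (k+1)^2) :
    ∀ d m, b m * b (m+1+d) ≤ b (m+1) * b (m+d) := by
  intro d
  induction d with
  | zero => intro m; simp [mul_comm]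
  | succ d ih =>
    intro m
    have h1 := hlc (m+d)
    have h2 := ih m
    have p1 := hb (m+d)
    have p2 := hb (m+1+d)
    have p3 := hb (m+d+2)
    have p4 := hb (m+1)
    have p5 := hb m
    have e1 : m+1+(d+1) = m+d+2 := by ring
    have e2 : m+(d+1) = m+1+d := by ring
    have e3 : m+d+1 = m+1+d := by ring
    rw [e1, e2]
    rw [e3] at h1
    nlinarith [mul_pos p5 p3, mul_pos p4 p1]

lemma step_bound (b : ℕ → ℝ) (hb : ∀ k, 0 < b k)
    (hlc : ∀ k, b k * b (k+2) ≤ b (k+1)^2) (k : ℕ) :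
    ∀ d j, j + d ≤ k → b j * b (k+2)^d ≤ b (j+d) * b (k+1)^d := by
  intro d
  induction d with
  | zero => intro j _; simp
  | succ d ih =>
    intro j hj
    have hr : b j * b (k+2) ≤ b (j+1) * b (k+1) := by
      have := ratio_mono b hb hlc (k+1-j) j
      have e1 : j + 1 + (k+1-j) = k + 2 := by omega
      have e2 : j + (k+1-j) = k + 1 := by omega
      rwa [e1, e2] at this
    have ih' := ih (j+1) (by omega)
    have pk2 : (0:ℝ) < b (k+2)^d := pow_pos (hb _) d
    have pk1 : (0:ℝ) ≤ b (k+1) := (hb _).le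
    calc b j * b (k+2)^(d+1) = (b j * b (k+2)) * b (k+2)^d := by ring
      _ ≤ (b (j+1) * b (k+1)) * b (k+2)^d := by nlinarith
      _ = b (k+1) * (b (j+1) * b (k+2)^d) := by ring
      _ ≤ b (k+1) * (b (j+1+d) * b (k+1)^d) := by
          have := hb (j+1)
          nlinarith [ih', hb (j+1+d), pow_pos (hb (k+1)) d]
      _ = b (j+(d+1)) * b (k+1)^(d+1) := by rw [show j+1+d = j+(d+1) by ring]; ring

lemma conv_logConcave (r : ℝ) (hr : 0 < r) (b : ℕ → ℝ) (hb : ∀ k, 0 < b k)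
    (hlc : ∀ k, b k * b (k+2) ≤ b (k+1)^2)
    (c : ℕ → ℝ) (hc : ∀ k, c k = ∑ j ∈ Finset.range (k+1), r^(k-j) * b j) :
    (∀ k, 0 < c k) ∧ (∀ k, c k * c (k+2) ≤ c (k+1)^2) := by
  have hcpos : ∀ k, 0 < c k := by
    intro k
    rw [hc k]
    apply Finset.sum_pos
    · intro j _; exact mul_pos (pow_pos hr _) (hb j)
    · exact ⟨0, Finset.mem_range.2 (Nat.succ_pos k)⟩
  have hrec : ∀ k, c (k+1) = r * c k + b (k+1) := by
    intro k
    rw [hc (k+1), hc k, Finset.sum_range_succ]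
    have : ∀ j ∈ Finset.range (k+1), r^(k+1-j) * b j = r * (r^(k-j) * b j) := by
      intro j hj
      have hjk : j ≤ k := Nat.lt_succ_iff.1 (Finset.mem_range.1 hj)
      rw [show k+1-j = (k-j)+1 by omega, pow_succ]
      ring
    rw [Finset.sum_congr rfl this, ← Finset.mul_sum]
    simp
  refine ⟨hcpos, fun k => ?_⟩
  have key : c k * b (k+2) ≤ b (k+1)^2 + r * c k * b (k+1) := by
    by_cases h : b (k+2) ≤ r * b (k+1)
    · nlinarith [hcpos k, sq_nonneg (b (k+1))]
    · push_neg at h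
      set s : ℝ := r * b (k+1) / b (k+2) with hs
      have hbk2 : 0 < b (k+2) := hb (k+2)
      have hs0 : 0 ≤ s := by exact div_nonneg (mul_nonneg hr.le (hb _).le) (hb _).le
      have hs1 : s < 1 := (div_lt_one hbk2).2 h
      have hsb : s * b (k+2) = r * b (k+1) := div_mul_cancel₀ _ hbk2.ne'
      -- termwise bound
      have hterm : ∀ j ∈ Finset.range (k+1), r^(k-j) * b j ≤ b k * s^(k-j) := by
        intro j hj
        have hjk : j ≤ k := Nat.lt_succ_iff.1 (Finset.mem_range.1 hj)
        have hsb' := step_bound b hb hlc k (k-j) j (by omega)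
        rw [show j + (k-j) = k by omega] at hsb'
        have hpow : s^(k-j) * b (k+2)^(k-j) = r^(k-j) * b (k+1)^(k-j) := by
          rw [← mul_pow, hsb, mul_pow]
        have hpos : (0:ℝ) < b (k+2)^(k-j) := pow_pos hbk2 _
        have : r^(k-j) * b j * b (k+2)^(k-j) ≤ b k * s^(k-j) * b (k+2)^(k-j) := by
          calc r^(k-j) * b j * b (k+2)^(k-j) = r^(k-j) * (b j * b (k+2)^(k-j)) := by ring
            _ ≤ r^(k-j) * (b k * b (k+1)^(k-j)) := by
                have := pow_pos hr (k-j); nlinarith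
            _ = b k * (s^(k-j) * b (k+2)^(k-j)) := by rw [hpow]; ring
            _ = b k * s^(k-j) * b (k+2)^(k-j) := by ring
        exact le_of_mul_le_mul_right this hpos
      have hsum : c k ≤ b k * ∑ m ∈ Finset.range (k+1), s^m := by
        rw [hc k, Finset.mul_sum]
        calc ∑ j ∈ Finset.range (k+1), r^(k-j) * b j
            ≤ ∑ j ∈ Finset.range (k+1), b k * s^(k-j) := Finset.sum_le_sum hterm
          _ = ∑ m ∈ Finset.range (k+1), b k * s^m := by
              have := Finset.sum_range_reflect (fun m => b k * s^m) (k+1)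
              simpa using this
      have hgeo : (∑ m ∈ Finset.range (k+1), s^m) * (1 - s) ≤ 1 := by
        have := geom_sum_mul s (k+1)
        have h2 : (∑ m ∈ Finset.range (k+1), s^m) * (1 - s) = 1 - s^(k+1) := by
          nlinarith [this]
        rw [h2]
        nlinarith [pow_nonneg hs0 (k+1)]
      -- c k * (b(k+2) - r*b(k+1)) ≤ b k * b (k+2)
      have hck : c k * (b (k+2) - r * b (k+1)) ≤ b k * b (k+2) := by
        have h1s : 0 < 1 - s := by linarith
        have : c k * (1 - s) ≤ b k := by
          calc c k * (1-s) ≤ (b k * ∑ m ∈ Finset.range (k+1), s^m) * (1-s) := by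
                nlinarith [hcpos k]
            _ = b k * ((∑ m ∈ Finset.range (k+1), s^m) * (1-s)) := by ring
            _ ≤ b k * 1 := by nlinarith [hb k]
            _ = b k := mul_one _
        have hexp : (1-s) * b (k+2) = b (k+2) - r * b (k+1) := by
          rw [sub_mul, one_mul, hsb]
        have h3 : c k * (1-s) * b (k+2) ≤ b k * b (k+2) :=
          mul_le_mul_of_nonneg_right this hbk2.le
        calc c k * (b (k+2) - r * b (k+1)) = c k * (1-s) * b (k+2) := by
              rw [← hexp]; ring
          _ ≤ b k * b (k+2) := h3
      nlinarith [hlc k, hck]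
  have h1 := hrec k
  have h2 := hrec (k+1)
  have e : k + 1 + 1 = k + 2 := rfl
  rw [e] at h2
  rw [h2, h1]
  nlinarith [key]


lemma geom_pmf {Ω : Type*} [MeasurableSpace Ω] (P : Measure Ω)
    [IsProbabilityMeasure P] (y : ℝ) (hy0 : 0 ≤ y) (Z : Ω → ℕ) (hZ : Measurable Z)
    (hg : ∀ k : ℕ, P {ω | k ≤ Z ω} = ENNReal.ofReal (y ^ k)) (k : ℕ) :
    P {ω | Z ω = k} = ENNReal.ofReal (y ^ k * (1 - y)) := by
  have hset : {ω | Z ω = k} = {ω | k ≤ Z ω} \ {ω | k + 1 ≤ Z ω} := by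
    ext ω; simp only [Set.mem_setOf_eq, Set.mem_diff]; omega
  have hsub : {ω | k + 1 ≤ Z ω} ⊆ {ω | k ≤ Z ω} := fun ω h => by
    simp only [Set.mem_setOf_eq] at *; omega
  have hm : MeasurableSet {ω | k + 1 ≤ Z ω} := by
    have : {ω | k + 1 ≤ Z ω} = Z ⁻¹' (Set.Ici (k+1)) := rfl
    rw [this]; exact hZ measurableSet_Ici
  rw [hset, measure_diff hsub hm.nullMeasurableSet (measure_ne_top P _), hg, hg]
  rw [← ENNReal.ofReal_sub _ (by positivity)]
  congr 1
  rw [pow_succ]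
  ring

theorem Sn_logconcave {Ω : Type*} [MeasurableSpace Ω] (P : Measure Ω)
    [IsProbabilityMeasure P] (x : ℝ) (hx0 : 0 < x) (hx1 : x < 1)
    (Z : ℕ → Ω → ℕ) (hmeas : ∀ i, Measurable (Z i))
    (hindep : iIndepFun Z P)
    (hgeom : ∀ i, 1 ≤ i → ∀ k : ℕ, P {ω | k ≤ Z i ω} = ENNReal.ofReal (x ^ (i * k)))
    (n : ℕ) (hn : 1 ≤ n) (k : ℕ) :
    P {ω | ∑ i ∈ Finset.Icc 1 n, Z i ω = k}
        * P {ω | ∑ i ∈ Finset.Icc 1 n, Z i ω = k + 2}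
      ≤ (P {ω | ∑ i ∈ Finset.Icc 1 n, Z i ω = k + 1}) ^ 2 := by
  have pmfZ : ∀ i, 1 ≤ i → ∀ m : ℕ,
      P {ω | Z i ω = m} = ENNReal.ofReal ((x^i)^m * (1 - x^i)) := by
    intro i hi m
    refine geom_pmf P (x^i) (by positivity) (Z i) (hmeas i) (fun m => ?_) m
    rw [← pow_mul]
    exact hgeom i hi m
  have main : ∀ N, 1 ≤ N → ∃ f : ℕ → ℝ, (∀ m, 0 < f m) ∧
      (∀ m, f m * f (m+2) ≤ f (m+1)^2) ∧
      ∀ m, P {ω | ∑ i ∈ Finset.Icc 1 N, Z i ω = m} = ENNReal.ofReal (f m) := by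
    intro N
    induction N with
    | zero => intro h; omega
    | succ N ih =>
      intro _
      by_cases hN0 : N = 0
      · subst hN0
        refine ⟨fun m => x^m * (1-x),
          fun m => mul_pos (pow_pos hx0 m) (by linarith),
          fun m => by ring_nf; nlinarith [pow_pos hx0 m], fun m => ?_⟩
        have hset : {ω | ∑ i ∈ Finset.Icc 1 1, Z i ω = m} = {ω | Z 1 ω = m} := by
          ext ω; simp
        rw [hset]
        have := pmfZ 1 le_rfl m
        simpa using this
      · have hN : 1 ≤ N := by omega
        obtain ⟨f, hfpos, hflc, hfm⟩ := ih hN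
        set y : ℝ := x^(N+1) with hy
        have hy0 : 0 < y := pow_pos hx0 _
        have hy1 : y < 1 := pow_lt_one₀ hx0.le hx1 (by omega)
        set c : ℕ → ℝ := fun m => ∑ j ∈ Finset.range (m+1), y^(m-j) * f j with hcdef
        obtain ⟨hcpos, hclc⟩ := conv_logConcave y hy0 f hfpos hflc c (fun m => rfl)
        refine ⟨fun m => (1-y) * c m, fun m => mul_pos (by linarith) (hcpos m),
          fun m => ?_, fun m => ?_⟩
        · have := hclc m
          show (1-y) * c m * ((1-y) * c (m+2)) ≤ ((1-y) * c (m+1))^2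
          nlinarith [sq_nonneg (1-y), hcpos m, hcpos (m+2)]
        · -- measure computation
          have hicc : Finset.Icc 1 (N+1) = insert (N+1) (Finset.Icc 1 N) := by
            ext i; simp only [Finset.mem_Icc, Finset.mem_insert]; omega
          have hnotmem : (N+1) ∉ Finset.Icc 1 N := by simp
          set S : Ω → ℕ := fun ω => ∑ i ∈ Finset.Icc 1 N, Z i ω with hS
          have hSm : Measurable S := Finset.measurable_sum _ (fun i _ => hmeas i)
          have hSind : IndepFun S (Z (N+1)) P := by
            have h := hindep.indepFun_finsetSum_of_notMem hmeas hnotmem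
            have he : (∑ j ∈ Finset.Icc 1 N, Z j) = S := by
              ext ω; simp [hS, Finset.sum_apply]
            rwa [he] at h
          have hset : {ω | ∑ i ∈ Finset.Icc 1 (N+1), Z i ω = m}
              = ⋃ j ∈ Finset.range (m+1), (S ⁻¹' {j} ∩ Z (N+1) ⁻¹' {m - j}) := by
            ext ω
            simp only [Set.mem_setOf_eq, Set.mem_iUnion, Finset.mem_range,
              Set.mem_inter_iff, Set.mem_preimage, Set.mem_singleton_iff]
            rw [hicc, Finset.sum_insert hnotmem]
            have hSω : S ω = ∑ i ∈ Finset.Icc 1 N, Z i ω := rfl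
            constructor
            · intro h
              refine ⟨S ω, by omega, rfl, by omega⟩
            · rintro ⟨j, hj, h1, h2⟩
              omega
          have hdisj : (↑(Finset.range (m+1)) : Set ℕ).PairwiseDisjoint
              (fun j => S ⁻¹' {j} ∩ Z (N+1) ⁻¹' {m - j}) := by
            intro i _ j _ hij
            refine Set.disjoint_left.2 ?_
            rintro ω ⟨h1, _⟩ ⟨h2, _⟩
            exact hij (h1.symm.trans h2)
          have hmeasSets : ∀ j ∈ Finset.range (m+1),
              MeasurableSet (S ⁻¹' {j} ∩ Z (N+1) ⁻¹' {m - j}) := fun j _ =>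
            (hSm (measurableSet_singleton j)).inter
              ((hmeas (N+1)) (measurableSet_singleton _))
          rw [hset, measure_biUnion_finset hdisj hmeasSets]
          have hterm : ∀ j ∈ Finset.range (m+1),
              P (S ⁻¹' {j} ∩ Z (N+1) ⁻¹' {m - j})
                = ENNReal.ofReal (f j * (y^(m-j) * (1-y))) := by
            intro j _
            rw [hSind.measure_inter_preimage_eq_mul _ _ (measurableSet_singleton j)
              (measurableSet_singleton _)]
            have e1 : S ⁻¹' {j} = {ω | ∑ i ∈ Finset.Icc 1 N, Z i ω = j} := by
              ext ω; simp [hS]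
            have e2 : Z (N+1) ⁻¹' {m - j} = {ω | Z (N+1) ω = m - j} := by
              ext ω; simp
            rw [e1, e2, hfm j, pmfZ (N+1) (by omega) (m-j),
              ← ENNReal.ofReal_mul (hfpos j).le]
          rw [Finset.sum_congr rfl hterm,
            ← ENNReal.ofReal_sum_of_nonneg (fun j _ =>
              mul_nonneg (hfpos j).le (mul_nonneg (pow_nonneg hy0.le _) (by linarith)))]
          congr 1
          show ∑ i ∈ Finset.range (m+1), f i * (y^(m-i) * (1-y))
              = (1-y) * ∑ j ∈ Finset.range (m+1), y^(m-j) * f j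
          rw [Finset.mul_sum]
          exact Finset.sum_congr rfl (fun j _ => by ring)
  obtain ⟨f, hp, hl, hm⟩ := main n hn
  rw [hm k, hm (k+1), hm (k+2), ← ENNReal.ofReal_mul (hp k).le,
    ← ENNReal.ofReal_pow (hp (k+1)).le]
  exact ENNReal.ofReal_le_ofReal (hl k)
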